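/- Let m ≥ 2. Let V₁ = ℝ^m with its standard inner product, let V₂ be the space of real skew-symmetric m×m matrices, and let B : V₁ × V₁ → V₂ be the alternating bilinear map B(u,v) = u vᵀ − v uᵀ. Then the H-type deviation of this step-two Carnot datum equals √((m−2)/m). (This datum models the free Carnot group F_{2,m} of step two and rank m.) -/

import Mathlib

open scoped RealInnerProductSpace

noncomputable section

variable {V₁ : Type*} [NormedAddCommGroup V₁] [InnerProductSpace ℝ V₁] [FiniteDimensional ℝ V₁]
variable {V₂ : Type*} [AddCommGroup V₂] [Module ℝ V₂] [FiniteDimensional ℝ V₂]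

/-- `g` is an inner product (symmetric positive-definite bilinear form) on `V₂`. -/
structure IsInnerProd (g : V₂ →ₗ[ℝ] V₂ →ₗ[ℝ] ℝ) : Prop where
  symm : ∀ s t : V₂, g s t = g t s
  posdef : ∀ t : V₂, t ≠ 0 → 0 < g t t

/-- The norm `‖t‖_g = √(g t t)` associated to a vertical inner product `g`. -/
def gnorm (g : V₂ →ₗ[ℝ] V₂ →ₗ[ℝ] ℝ) (t : V₂) : ℝ := Real.sqrt (g t t)

/-- The Hilbert–Schmidt norm `‖F‖_HS = √(trace(F* F))` of an endomorphism of the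
inner product space `V₁`. -/
def hsNorm (F : V₁ →ₗ[ℝ] V₁) : ℝ :=
  Real.sqrt (LinearMap.trace ℝ V₁ (LinearMap.adjoint F ∘ₗ F))

/-- `J` is the J-operator of the bracket `B` with respect to the vertical inner product `g`:
`⟨J_T U, V⟩_h = g(B(U,V), T)` for all `U V : V₁`, `T : V₂`. -/
def IsJOp (B : V₁ →ₗ[ℝ] V₁ →ₗ[ℝ] V₂) (g : V₂ →ₗ[ℝ] V₂ →ₗ[ℝ] ℝ)
    (J : V₂ → V₁ →ₗ[ℝ] V₁) : Prop :=
  ∀ (T : V₂) (U V : V₁), ⟪J T U, V⟫ = g (B U V) T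

/-- The H-type deviation relative to a fixed vertical inner product `g` with J-operator `J`:
`δ(g) = (dim V₁)^{-1/2} sup { ‖(J_T)² + id‖_HS : ‖T‖_g = 1 }`. -/
def deltaOf (g : V₂ →ₗ[ℝ] V₂ →ₗ[ℝ] ℝ) (J : V₂ → V₁ →ₗ[ℝ] V₁) : ℝ :=
  (Real.sqrt (Module.finrank ℝ V₁))⁻¹ *
    sSup ((fun T => hsNorm (J T ∘ₗ J T + LinearMap.id)) '' {T : V₂ | gnorm g T = 1})

/-- The H-type deviation of a step-two Carnot datum: the infimum of `δ(g)` over all vertical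
inner products `g` on `V₂`. -/
def htypeDeviation (B : V₁ →ₗ[ℝ] V₁ →ₗ[ℝ] V₂) : ℝ :=
  sInf { d : ℝ | ∃ (g : V₂ →ₗ[ℝ] V₂ →ₗ[ℝ] ℝ) (J : V₂ → V₁ →ₗ[ℝ] V₁),
    IsInnerProd g ∧ IsJOp B g J ∧ d = deltaOf g J }

end

noncomputable section

open scoped RealInnerProductSpace
open Matrix

/-- The space of real skew-symmetric `m × m` matrices, as a submodule. -/
def skewMat (m : ℕ) : Submodule ℝ (Matrix (Fin m) (Fin m) ℝ) where
  carrier := {A | Aᵀ = -A}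
  add_mem' := by
    intro a b ha hb
    simp only [Set.mem_setOf_eq] at *
    rw [Matrix.transpose_add, ha, hb, neg_add]
  zero_mem' := by simp
  smul_mem' := by
    intro c A hA
    simp only [Set.mem_setOf_eq] at *
    rw [Matrix.transpose_smul, hA, smul_neg]

namespace HTFree

variable {m : ℕ}

/-! ### Matrix-level bridging lemmas -/

lemma ct_eq (A : Matrix (Fin m) (Fin m) ℝ) : Aᴴ = Aᵀ := by
  ext i j; simp [Matrix.conjTranspose_apply]

lemma toEuclideanLin_comp (A B : Matrix (Fin m) (Fin m) ℝ) :
    toEuclideanLin A ∘ₗ toEuclideanLin B = toEuclideanLin (A * B) := by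
  apply LinearMap.ext; intro x
  simp [Matrix.toEuclideanLin_apply, Matrix.mulVec_mulVec]

lemma toEuclideanLin_one : toEuclideanLin (1 : Matrix (Fin m) (Fin m) ℝ) = LinearMap.id := by
  apply LinearMap.ext; intro x
  simp [Matrix.toEuclideanLin_apply]

lemma trace_toEuclideanLin (A : Matrix (Fin m) (Fin m) ℝ) :
    LinearMap.trace ℝ (EuclideanSpace ℝ (Fin m)) (toEuclideanLin A) = A.trace := by
  rw [Matrix.toEuclideanLin_eq_toLin, LinearMap.trace_eq_matrix_trace ℝ (PiLp.basisFun 2 ℝ (Fin m)),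
    LinearMap.toMatrix_toLin]

lemma trace_transpose_mul_self (A : Matrix (Fin m) (Fin m) ℝ) :
    (Aᵀ * A).trace = ∑ i, ∑ j, (A i j)^2 := by
  rw [Matrix.trace]
  simp only [Matrix.diag_apply, Matrix.mul_apply, Matrix.transpose_apply]
  rw [Finset.sum_comm]
  exact Finset.sum_congr rfl fun i _ => Finset.sum_congr rfl fun j _ => (sq (A i j)).symm ▸ by ring

section Frob

attribute [local instance] Matrix.frobeniusSeminormedAddCommGroup
  Matrix.frobeniusNormedAddCommGroup Matrix.frobeniusNormedSpace

lemma sqrt_trace_eq_norm (A : Matrix (Fin m) (Fin m) ℝ) :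
    Real.sqrt ((Aᵀ * A).trace) = ‖A‖ := by
  rw [trace_transpose_mul_self, Matrix.frobenius_norm_def]
  rw [Real.sqrt_eq_rpow]
  congr 1
  refine Finset.sum_congr rfl fun i _ => Finset.sum_congr rfl fun j _ => ?_
  rw [Real.rpow_two]
  rw [Real.norm_eq_abs, sq_abs]

lemma hsNorm_eq (A : Matrix (Fin m) (Fin m) ℝ) :
    hsNorm (toEuclideanLin A) = Real.sqrt ((Aᵀ * A).trace) := by
  rw [hsNorm, ← Matrix.toEuclideanLin_conjTranspose_eq_adjoint, toEuclideanLin_comp,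
    trace_toEuclideanLin, ct_eq]

lemma hs_bound (A : Matrix (Fin m) (Fin m) ℝ) :
    Real.sqrt (((A*A+1)ᵀ * (A*A+1)).trace) ≤
      Real.sqrt ((Aᵀ * A).trace) * Real.sqrt ((Aᵀ * A).trace) + Real.sqrt m := by
  have hone : Real.sqrt (((1:Matrix (Fin m) (Fin m) ℝ)ᵀ * 1).trace) = Real.sqrt m := by
    rw [Matrix.transpose_one, Matrix.one_mul, Matrix.trace_one]
    simp [Fintype.card_fin]
  rw [sqrt_trace_eq_norm, sqrt_trace_eq_norm]
  rw [← hone, sqrt_trace_eq_norm]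
  calc ‖A*A+1‖ ≤ ‖A*A‖ + ‖(1:Matrix (Fin m) (Fin m) ℝ)‖ := norm_add_le _ _
    _ ≤ ‖A‖ * ‖A‖ + ‖(1:Matrix (Fin m) (Fin m) ℝ)‖ := by
        have := Matrix.frobenius_norm_mul A A
        linarith

end Frob

/-! ### Flattening map -/

def flatE (m : ℕ) : Matrix (Fin m) (Fin m) ℝ →ₗ[ℝ] EuclideanSpace ℝ (Fin m × Fin m) where
  toFun A := (WithLp.equiv 2 (Fin m × Fin m → ℝ)).symm (fun p => A p.1 p.2)
  map_add' A B := by ext p; simp [Matrix.add_apply]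
  map_smul' c A := by ext p; simp [Matrix.smul_apply]

lemma flatE_norm (A : Matrix (Fin m) (Fin m) ℝ) :
    ‖flatE m A‖ = Real.sqrt ((Aᵀ * A).trace) := by
  rw [trace_transpose_mul_self, EuclideanSpace.norm_eq]
  congr 1
  rw [Fintype.sum_prod_type]
  refine Finset.sum_congr rfl fun i _ => Finset.sum_congr rfl fun j _ => ?_
  simp [flatE, Real.norm_eq_abs, sq_abs]

/-! ### Spectral inequality -/

lemma trace_eq_sum_eigen {A : Matrix (Fin m) (Fin m) ℝ} (hA : A.IsHermitian) :
    A.trace = ∑ i, hA.eigenvalues i := by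
  conv_lhs => rw [hA.spectral_theorem, Unitary.conjStarAlgAut_apply]
  rw [Matrix.trace_mul_cycle, Unitary.coe_star_mul_self, Matrix.one_mul,
    Matrix.trace_diagonal]
  simp

lemma trace_sq_eq_sum_eigen {A : Matrix (Fin m) (Fin m) ℝ} (hA : A.IsHermitian) :
    (A * A).trace = ∑ i, (hA.eigenvalues i)^2 := by
  set U : Matrix (Fin m) (Fin m) ℝ := (hA.eigenvectorUnitary : Matrix (Fin m) (Fin m) ℝ) with hU
  set D : Matrix (Fin m) (Fin m) ℝ := diagonal (RCLike.ofReal ∘ hA.eigenvalues) with hD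
  have hsU : star U * U = 1 := Unitary.coe_star_mul_self _
  have key : A * A = U * (D * D) * star U := by
    conv_lhs => rw [hA.spectral_theorem, Unitary.conjStarAlgAut_apply]
    calc (U * D * star U) * (U * D * star U)
        = U * D * ((star U * U) * (D * star U)) := by simp only [Matrix.mul_assoc]
      _ = U * (D * D) * star U := by rw [hsU, Matrix.one_mul]; simp only [Matrix.mul_assoc]
  rw [key, Matrix.trace_mul_cycle, ← Matrix.mul_assoc, hsU, Matrix.one_mul,
    Matrix.diagonal_mul_diagonal, Matrix.trace_diagonal]
  simp [sq]

lemma key_ineq (hm : 0 < m) (A : Matrix (Fin m) (Fin m) ℝ) (hA : Aᵀ = -A) :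
    ((Aᵀ * A) * (Aᵀ * A)).trace ≤ ((Aᵀ * A).trace)^2 / 2 := by
  have : Nonempty (Fin m) := ⟨⟨0, hm⟩⟩
  set M : Matrix (Fin m) (Fin m) ℝ := Aᵀ * A with hMdef
  have hPSD : M.PosSemidef := by
    rw [hMdef, ← ct_eq]; exact Matrix.posSemidef_conjTranspose_mul_self A
  have hM : M.IsHermitian := hPSD.1
  have hMsymm : Mᵀ = M := by rw [← ct_eq]; exact hM
  set μ := hM.eigenvalues with hμ
  have hnonneg : ∀ i, 0 ≤ μ i := fun i => hPSD.eigenvalues_nonneg i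
  have htr : M.trace = ∑ i, μ i := trace_eq_sum_eigen hM
  have htr2 : (M * M).trace = ∑ i, (μ i)^2 := trace_sq_eq_sum_eigen hM
  obtain ⟨i₀, -, hmax⟩ := Finset.exists_max_image Finset.univ μ Finset.univ_nonempty
  simp only [Finset.mem_univ, forall_true_left] at hmax
  set lam := μ i₀ with hlam
  rcases le_or_gt lam 0 with hneg | hpos
  · -- all eigenvalues are zero
    have hzero : ∀ i, μ i = 0 := fun i => le_antisymm ((hmax i).trans hneg) (hnonneg i)
    rw [htr2]
    have : ∑ i, (μ i)^2 = 0 := by simp [hzero]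
    rw [this]
    positivity
  · -- construct second eigenvector
    set b := hM.eigenvectorBasis with hb
    set v : Fin m → ℝ := ⇑(b i₀) with hv
    have hMv : M *ᵥ v = lam • v := hM.mulVec_eigenvectorBasis i₀
    set w : Fin m → ℝ := A *ᵥ v with hw
    have hvv : v ⬝ᵥ v = 1 := by
      have h1 : ‖b i₀‖ = 1 := b.orthonormal.1 i₀
      have h2 : ⟪b i₀, b i₀⟫ = v ⬝ᵥ v := by
        rw [PiLp.inner_apply]; simp [dotProduct, hv, sq]
      rw [← h2, real_inner_self_eq_norm_mul_norm, h1]; norm_num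
    -- symmetric move
    have hsymmove : ∀ x y : Fin m → ℝ, (M *ᵥ x) ⬝ᵥ y = x ⬝ᵥ (M *ᵥ y) := by
      intro x y
      conv_rhs => rw [Matrix.dotProduct_mulVec, ← Matrix.mulVec_transpose, hMsymm]
    have hww : w ⬝ᵥ w = lam := by
      have h1 : v ⬝ᵥ (M *ᵥ v) = w ⬝ᵥ w := by
        rw [hMdef, ← Matrix.mulVec_mulVec, Matrix.dotProduct_mulVec, Matrix.vecMul_transpose, hw]
      rw [← h1, hMv, dotProduct_smul, smul_eq_mul, hvv, mul_one]
    have hMw : M *ᵥ w = lam • w := by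
      have hMA : M * A = A * M := by
        rw [hMdef, hA]; simp only [Matrix.neg_mul, Matrix.mul_neg, neg_neg, Matrix.mul_assoc]
      rw [hw, Matrix.mulVec_mulVec, hMA, ← Matrix.mulVec_mulVec, hMv, Matrix.mulVec_smul]
    have hvw : v ⬝ᵥ w = 0 := by
      have h1 : v ⬝ᵥ (A *ᵥ v) = (Aᵀ *ᵥ v) ⬝ᵥ v := by
        rw [Matrix.dotProduct_mulVec, ← Matrix.mulVec_transpose]
      have h2 : (Aᵀ *ᵥ v) ⬝ᵥ v = -(v ⬝ᵥ (A *ᵥ v)) := by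
        rw [hA, Matrix.neg_mulVec, neg_dotProduct, dotProduct_comm]
      have := h1.trans h2
      rw [hw]; linarith
    -- coefficients
    set c : Fin m → ℝ := fun i => ⇑(b i) ⬝ᵥ w with hc
    have hci : ∀ i, (μ i - lam) * c i = 0 := by
      intro i
      have h1 : (M *ᵥ ⇑(b i)) ⬝ᵥ w = μ i * c i := by
        rw [hM.mulVec_eigenvectorBasis i, smul_dotProduct, smul_eq_mul]
      have h2 : (M *ᵥ ⇑(b i)) ⬝ᵥ w = lam * c i := by
        rw [hsymmove, hMw, dotProduct_smul, smul_eq_mul]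
      have := h1.symm.trans h2
      linear_combination this
    have hci₀ : c i₀ = 0 := hvw
    have hex : ∃ i, c i ≠ 0 := by
      by_contra hcon
      push_neg at hcon
      have hwE : (WithLp.equiv 2 (Fin m → ℝ)).symm w = 0 := by
        have : b.repr ((WithLp.equiv 2 (Fin m → ℝ)).symm w) = 0 := by
          ext i
          rw [b.repr_apply_apply]
          have : ⟪b i, (WithLp.equiv 2 (Fin m → ℝ)).symm w⟫ = c i := by
            rw [PiLp.inner_apply]; simp [hc, dotProduct, mul_comm]
          exact this.trans (hcon i)
        simpa using b.repr.map_eq_zero_iff.mp this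
      have hw0 : w = 0 := by
        have := congrArg (WithLp.equiv 2 (Fin m → ℝ)) hwE
        simpa using this
      rw [hw0] at hww
      simp at hww
      exact absurd hww.symm (ne_of_gt hpos)
    obtain ⟨i₁, hi₁⟩ := hex
    have hμi₁ : μ i₁ = lam := by
      have := hci i₁
      rcases mul_eq_zero.mp this with h | h
      · linarith [sub_eq_zero.mp h]
      · exact absurd h hi₁
    have hne : i₁ ≠ i₀ := by
      intro h; rw [h, hci₀] at hi₁; exact hi₁ rfl
    have h2lam : 2 * lam ≤ ∑ i, μ i := by
      have hsub : ({i₀, i₁} : Finset (Fin m)) ⊆ Finset.univ := Finset.subset_univ _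
      have hpair : ∑ i ∈ ({i₀, i₁} : Finset (Fin m)), μ i = 2 * lam := by
        rw [Finset.sum_pair (Ne.symm hne), hμi₁, ← hlam]; ring
      calc 2 * lam = ∑ i ∈ ({i₀, i₁} : Finset (Fin m)), μ i := hpair.symm
        _ ≤ ∑ i, μ i := Finset.sum_le_sum_of_subset_of_nonneg hsub (fun i _ _ => hnonneg i)
    -- final assembly
    have hsumnn : 0 ≤ ∑ i, μ i := Finset.sum_nonneg fun i _ => hnonneg i
    rw [htr2, htr]
    calc ∑ i, (μ i)^2 ≤ ∑ i, lam * μ i := by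
          refine Finset.sum_le_sum fun i _ => ?_
          rw [sq]
          exact mul_le_mul_of_nonneg_right (hmax i) (hnonneg i)
      _ = lam * ∑ i, μ i := by rw [Finset.mul_sum]
      _ ≤ ((∑ i, μ i)/2) * ∑ i, μ i := by
          apply mul_le_mul_of_nonneg_right _ hsumnn
          linarith
      _ = (∑ i, μ i)^2 / 2 := by ring


/-! ### Explicit matrices -/

lemma transpose_sbm (i j : Fin m) (c : ℝ) :
    (Matrix.single i j c)ᵀ = Matrix.single j i c := by
  ext a b
  simp only [Matrix.transpose_apply, Matrix.single, Matrix.of_apply]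
  exact if_congr and_comm rfl rfl

def A0 (i j : Fin m) : Matrix (Fin m) (Fin m) ℝ :=
  Matrix.single i j 1 - Matrix.single j i 1

lemma A0_transpose (i j : Fin m) : (A0 i j)ᵀ = -(A0 i j) := by
  unfold A0
  rw [Matrix.transpose_sub, transpose_sbm, transpose_sbm]
  abel

lemma A0_apply_ne (i j : Fin m) (h : i ≠ j) : A0 i j i j = 1 := by
  unfold A0
  simp [Matrix.sub_apply, Matrix.single_apply_same, Matrix.single, h.symm]

def P0 (i j : Fin m) : Matrix (Fin m) (Fin m) ℝ :=
  Matrix.single i i 1 + Matrix.single j j 1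

lemma A0_mul_self (i j : Fin m) (h : i ≠ j) : A0 i j * A0 i j = -(P0 i j) := by
  unfold A0 P0
  have e1 : Matrix.single i j (1:ℝ) * Matrix.single i j 1 = 0 :=
    by simp [h.symm]
  have e2 : Matrix.single j i (1:ℝ) * Matrix.single j i 1 = 0 :=
    by simp [h]
  rw [sub_mul, mul_sub, mul_sub, e1, e2, Matrix.single_mul_single_same,
    Matrix.single_mul_single_same, mul_one]
  abel

lemma P0_transpose (i j : Fin m) : (P0 i j)ᵀ = P0 i j := by
  unfold P0; rw [Matrix.transpose_add, transpose_sbm, transpose_sbm]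

lemma P0_mul_self (i j : Fin m) (h : i ≠ j) : P0 i j * P0 i j = P0 i j := by
  unfold P0
  have e1 : Matrix.single i i (1:ℝ) * Matrix.single j j 1 = 0 :=
    by simp [h]
  have e2 : Matrix.single j j (1:ℝ) * Matrix.single i i 1 = 0 :=
    by simp [h.symm]
  rw [add_mul, mul_add, mul_add, e1, e2, Matrix.single_mul_single_same,
    Matrix.single_mul_single_same, mul_one]
  abel

lemma P0_trace (i j : Fin m) (h : i ≠ j) : (P0 i j).trace = 2 := by
  unfold P0
  rw [Matrix.trace_add, Matrix.trace_single_eq_same, Matrix.trace_single_eq_same]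
  norm_num

lemma val_calc (i j : Fin m) (h : i ≠ j) (c : ℝ) :
    ((((c • A0 i j) * (c • A0 i j) + 1)ᵀ) * ((c • A0 i j) * (c • A0 i j) + 1)).trace
      = m - 4*c^2 + 2*c^4 := by
  have h1 : (c • A0 i j) * (c • A0 i j) = (-(c^2)) • P0 i j := by
    rw [Matrix.smul_mul, Matrix.mul_smul, A0_mul_self i j h, smul_smul]
    rw [smul_neg, ← neg_smul]
    ring_nf
  set a : ℝ := -(c^2) with ha
  have h2 : ((a • P0 i j + 1)ᵀ) = a • P0 i j + 1 := by
    rw [Matrix.transpose_add, Matrix.transpose_smul, P0_transpose, Matrix.transpose_one]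
  rw [h1, h2]
  have h3 : (a • P0 i j + 1) * (a • P0 i j + 1)
      = (2*a + a^2) • P0 i j + 1 := by
    rw [add_mul, mul_add, mul_add, Matrix.smul_mul, Matrix.mul_smul, smul_smul,
      P0_mul_self i j h, Matrix.one_mul, Matrix.mul_one, Matrix.one_mul]
    module
  rw [h3, Matrix.trace_add, Matrix.trace_smul, P0_trace i j h, Matrix.trace_one]
  simp only [smul_eq_mul, Fintype.card_fin]
  push_cast
  ring

/-! ### The reference inner product -/

lemma skew_coe (T : ↥(skewMat m)) :
    ((T : Matrix (Fin m) (Fin m) ℝ))ᵀ = -(T : Matrix (Fin m) (Fin m) ℝ) := T.prop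

lemma trace_transpose_mul (A B : Matrix (Fin m) (Fin m) ℝ) :
    (Aᵀ * B).trace = ∑ i, ∑ j, A i j * B i j := by
  rw [Matrix.trace]
  simp only [Matrix.diag_apply, Matrix.mul_apply, Matrix.transpose_apply]
  rw [Finset.sum_comm]

def g0 (m : ℕ) : ↥(skewMat m) →ₗ[ℝ] ↥(skewMat m) →ₗ[ℝ] ℝ :=
  LinearMap.mk₂ ℝ
    (fun S T => (1/2) * (((S : Matrix (Fin m) (Fin m) ℝ))ᵀ * (T : Matrix (Fin m) (Fin m) ℝ)).trace)
    (fun S S' T => by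
      simp only [Submodule.coe_add, Matrix.transpose_add, Matrix.add_mul, Matrix.trace_add]
      ring)
    (fun c S T => by
      simp only [SetLike.val_smul, Matrix.transpose_smul, Matrix.smul_mul, Matrix.trace_smul,
        smul_eq_mul]
      ring)
    (fun S T T' => by
      simp only [Submodule.coe_add, Matrix.mul_add, Matrix.trace_add]
      ring)
    (fun c S T => by
      simp only [SetLike.val_smul, Matrix.mul_smul, Matrix.trace_smul, smul_eq_mul]
      ring)

lemma g0_apply (S T : ↥(skewMat m)) :
    g0 m S T = (1/2) * (((S : Matrix (Fin m) (Fin m) ℝ))ᵀ * (T : Matrix (Fin m) (Fin m) ℝ)).trace :=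
  rfl

lemma g0_apply_sum (S T : ↥(skewMat m)) :
    g0 m S T = (1/2) * ∑ i, ∑ j, (S : Matrix (Fin m) (Fin m) ℝ) i j *
      (T : Matrix (Fin m) (Fin m) ℝ) i j := by
  rw [g0_apply, trace_transpose_mul]

def J0 (m : ℕ) : ↥(skewMat m) → (EuclideanSpace ℝ (Fin m) →ₗ[ℝ] EuclideanSpace ℝ (Fin m)) :=
  fun T => toEuclideanLin (-(T : Matrix (Fin m) (Fin m) ℝ))

end HTFree

namespace HTFree
variable {m : ℕ}

lemma g0_symm (S T : ↥(skewMat m)) : g0 m S T = g0 m T S := by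
  rw [g0_apply_sum, g0_apply_sum]
  congr 1
  exact Finset.sum_congr rfl fun i _ => Finset.sum_congr rfl fun j _ => mul_comm _ _

lemma g0_posdef (T : ↥(skewMat m)) (hT : T ≠ 0) : 0 < g0 m T T := by
  rw [g0_apply_sum]
  have hmat : (T : Matrix (Fin m) (Fin m) ℝ) ≠ 0 := by
    intro h
    exact hT (Subtype.ext h)
  have hex : ∃ i j, (T : Matrix (Fin m) (Fin m) ℝ) i j ≠ 0 := by
    by_contra hcon
    push_neg at hcon
    exact hmat (Matrix.ext fun i j => hcon i j)
  obtain ⟨i, j, hij⟩ := hex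
  have hpos : 0 < ∑ i, ∑ j, (T : Matrix (Fin m) (Fin m) ℝ) i j *
      (T : Matrix (Fin m) (Fin m) ℝ) i j := by
    apply Finset.sum_pos'
    · intro a _
      exact Finset.sum_nonneg fun b _ => mul_self_nonneg _
    · refine ⟨i, Finset.mem_univ i, Finset.sum_pos' (fun b _ => mul_self_nonneg _) ?_⟩
      exact ⟨j, Finset.mem_univ j, mul_self_pos.mpr hij⟩
  linarith

lemma inner_toEuclideanLin (A : Matrix (Fin m) (Fin m) ℝ) (u v : EuclideanSpace ℝ (Fin m)) :
    ⟪toEuclideanLin A u, v⟫ = ∑ i, ∑ j, A i j * u j * v i := by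
  rw [PiLp.inner_apply]
  refine Finset.sum_congr rfl fun i _ => ?_
  simp only [RCLike.inner_apply, starRingEnd_apply, star_trivial]
  rw [Matrix.toEuclideanLin_apply]
  simp only [PiLp.toLp_apply]
  rw [Matrix.mulVec, dotProduct]
  rw [Finset.mul_sum]
  refine Finset.sum_congr rfl fun j _ => ?_
  ring

lemma g0_J0_inner
    (B : EuclideanSpace ℝ (Fin m) →ₗ[ℝ] EuclideanSpace ℝ (Fin m) →ₗ[ℝ] ↥(skewMat m))
    (hB : ∀ u v : EuclideanSpace ℝ (Fin m),
      (B u v : Matrix (Fin m) (Fin m) ℝ) =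
        Matrix.vecMulVec (fun i => u i) (fun i => v i)
          - Matrix.vecMulVec (fun i => v i) (fun i => u i))
    (T : ↥(skewMat m)) (u v : EuclideanSpace ℝ (Fin m)) :
    ⟪J0 m T u, v⟫ = g0 m (B u v) T := by
  rw [J0, inner_toEuclideanLin, g0_apply_sum]
  have hT := skew_coe T
  set Tm := (T : Matrix (Fin m) (Fin m) ℝ) with hTm
  have hskew : ∀ a b, Tm b a = -(Tm a b) := by
    intro a b
    have := congrFun (congrFun hT a) b
    simpa [Matrix.transpose_apply] using this
  have hBe : ∀ i j, (B u v : Matrix (Fin m) (Fin m) ℝ) i j = u i * v j - v i * u j := by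
    intro i j
    rw [hB]
    simp [Matrix.sub_apply, Matrix.vecMulVec_apply]
  have hswap : ∑ i, ∑ j, u i * v j * Tm i j = ∑ i, ∑ j, -(v i * u j * Tm i j) := by
    rw [Finset.sum_comm]
    refine Finset.sum_congr rfl fun i _ => Finset.sum_congr rfl fun j _ => ?_
    rw [hskew j i]
    ring
  calc ∑ i, ∑ j, (-Tm) i j * u j * v i
      = ∑ i, ∑ j, -(v i * u j * Tm i j) := by
        refine Finset.sum_congr rfl fun i _ => Finset.sum_congr rfl fun j _ => ?_
        simp only [Matrix.neg_apply]
        ring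
    _ = (1/2) * ((∑ i, ∑ j, u i * v j * Tm i j) + ∑ i, ∑ j, -(v i * u j * Tm i j)) := by
        rw [hswap]
        ring
    _ = (1/2) * ∑ i, ∑ j, (B u v : Matrix (Fin m) (Fin m) ℝ) i j * Tm i j := by
        congr 1
        rw [← Finset.sum_add_distrib]
        refine Finset.sum_congr rfl fun i _ => ?_
        rw [← Finset.sum_add_distrib]
        refine Finset.sum_congr rfl fun j _ => ?_
        rw [hBe i j]
        ring

lemma repr_skew
    (B : EuclideanSpace ℝ (Fin m) →ₗ[ℝ] EuclideanSpace ℝ (Fin m) →ₗ[ℝ] ↥(skewMat m))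
    (hB : ∀ u v : EuclideanSpace ℝ (Fin m),
      (B u v : Matrix (Fin m) (Fin m) ℝ) =
        Matrix.vecMulVec (fun i => u i) (fun i => v i)
          - Matrix.vecMulVec (fun i => v i) (fun i => u i))
    (T : ↥(skewMat m)) :
    T = ∑ i : Fin m, ∑ j : Fin m, ((1/2 : ℝ) * (T : Matrix (Fin m) (Fin m) ℝ) i j) •
      B (EuclideanSpace.single i 1) (EuclideanSpace.single j 1) := by
  apply Subtype.ext
  push_cast [Submodule.coe_sum, SetLike.val_smul]
  apply Matrix.ext
  intro a b
  rw [Matrix.sum_apply]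
  symm
  have hT := skew_coe T
  have hskew : ∀ x y, (T : Matrix (Fin m) (Fin m) ℝ) y x = -((T : Matrix (Fin m) (Fin m) ℝ) x y) := by
    intro x y
    have := congrFun (congrFun hT x) y
    simpa [Matrix.transpose_apply] using this
  have hentry : ∀ i j, ((B (EuclideanSpace.single i 1) (EuclideanSpace.single j 1) :
      Matrix (Fin m) (Fin m) ℝ)) a b
      = (if a = i then (1:ℝ) else 0) * (if b = j then (1:ℝ) else 0)
        - (if a = j then (1:ℝ) else 0) * (if b = i then (1:ℝ) else 0) := by
    intro i j
    rw [hB]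
    simp [Matrix.sub_apply, Matrix.vecMulVec_apply, EuclideanSpace.single_apply]
  calc ∑ i, (∑ j, ((1/2 : ℝ) * (T : Matrix (Fin m) (Fin m) ℝ) i j) •
        (B (EuclideanSpace.single i 1) (EuclideanSpace.single j 1) : Matrix (Fin m) (Fin m) ℝ)) a b
      = ∑ i, ∑ j, ((1/2 : ℝ) * (T : Matrix (Fin m) (Fin m) ℝ) i j) *
          ((if a = i then (1:ℝ) else 0) * (if b = j then (1:ℝ) else 0)
        - (if a = j then (1:ℝ) else 0) * (if b = i then (1:ℝ) else 0)) := by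
        refine Finset.sum_congr rfl fun i _ => ?_
        rw [Matrix.sum_apply]
        refine Finset.sum_congr rfl fun j _ => ?_
        rw [Matrix.smul_apply, hentry i j, smul_eq_mul]
    _ = (T : Matrix (Fin m) (Fin m) ℝ) a b := by
        simp only [mul_sub, Finset.sum_sub_distrib]
        simp only [mul_ite, ite_mul, mul_one, mul_zero, zero_mul, one_mul,
          Finset.sum_ite_eq', Finset.sum_ite_eq, Finset.mem_univ, if_true]
        have hinner : ∀ x : Fin m, (∑ x_1 : Fin m, if b = x then
            if a = x_1 then 1/2 * (T : Matrix (Fin m) (Fin m) ℝ) x x_1 else 0 else 0)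
            = (if b = x then 1/2 * (T : Matrix (Fin m) (Fin m) ℝ) x a else 0) := by
          intro x
          split <;> simp [Finset.sum_ite_eq]
        rw [Finset.sum_congr rfl fun x _ => hinner x, Finset.sum_ite_eq]
        simp only [Finset.mem_univ, if_true]
        rw [hskew a b]
        ring

end HTFree

namespace HTFree
variable {m : ℕ}

lemma opform (X : Matrix (Fin m) (Fin m) ℝ) :
    toEuclideanLin X ∘ₗ toEuclideanLin X + LinearMap.id = toEuclideanLin (X * X + 1) := by
  rw [toEuclideanLin_comp, ← toEuclideanLin_one, ← map_add]

lemma ub (hm : 0 < m) (A : Matrix (Fin m) (Fin m) ℝ) (hA : Aᵀ = -A)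
    (htr : (Aᵀ * A).trace = 2) :
    ((A*A+1)ᵀ * (A*A+1)).trace ≤ (m : ℝ) - 2 := by
  have hAA : A * A = -(Aᵀ * A) := by rw [hA, Matrix.neg_mul, neg_neg]
  have hsymm : (A*A+1)ᵀ = A*A+1 := by
    rw [Matrix.transpose_add, Matrix.transpose_mul, hA, Matrix.transpose_one]
    congr 1
    rw [Matrix.neg_mul, Matrix.mul_neg, neg_neg]
  rw [hsymm]
  have hexp : (A*A+1) * (A*A+1) = (Aᵀ*A) * (Aᵀ*A) - (Aᵀ*A) - (Aᵀ*A) + 1 := by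
    rw [hAA]; noncomm_ring
  rw [hexp, Matrix.trace_add, Matrix.trace_sub, Matrix.trace_sub, htr, Matrix.trace_one]
  have hkey := key_ineq hm A hA
  rw [htr] at hkey
  simp only [Fintype.card_fin]
  norm_num at hkey ⊢
  linarith

lemma sphere_two (T : ↥(skewMat m)) (hT : gnorm (g0 m) T = 1) :
    (((T : Matrix (Fin m) (Fin m) ℝ))ᵀ * (T : Matrix (Fin m) (Fin m) ℝ)).trace = 2 := by
  have h1 : g0 m T T = 1 := by
    have := hT
    rw [gnorm, Real.sqrt_eq_one] at this
    exact this
  rw [g0_apply] at h1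
  linarith

/-- The value of the relevant function at any skew `T`. -/
lemma hs_val (T : ↥(skewMat m)) :
    hsNorm (J0 m T ∘ₗ J0 m T + LinearMap.id) =
      Real.sqrt (((((T : Matrix (Fin m) (Fin m) ℝ)) * (T : Matrix (Fin m) (Fin m) ℝ) + 1)ᵀ *
        ((T : Matrix (Fin m) (Fin m) ℝ) * (T : Matrix (Fin m) (Fin m) ℝ) + 1)).trace) := by
  have h1 : J0 m T ∘ₗ J0 m T + LinearMap.id =
      toEuclideanLin ((T : Matrix (Fin m) (Fin m) ℝ) * (T : Matrix (Fin m) (Fin m) ℝ) + 1) := by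
    rw [J0, toEuclideanLin_comp, neg_mul_neg, ← toEuclideanLin_one, ← map_add]
  rw [h1, hsNorm_eq]

section Witness

def i0 (hm : 2 ≤ m) : Fin m := ⟨0, by omega⟩
def i1 (hm : 2 ≤ m) : Fin m := ⟨1, by omega⟩

lemma i0_ne_i1 (hm : 2 ≤ m) : i0 hm ≠ i1 hm := by
  intro h
  have := congrArg Fin.val h
  simp [i0, i1] at this

def T0 (hm : 2 ≤ m) : ↥(skewMat m) :=
  ⟨A0 (i0 hm) (i1 hm), by
    show (A0 (i0 hm) (i1 hm))ᵀ = -(A0 (i0 hm) (i1 hm))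
    exact A0_transpose _ _⟩

lemma T0_trace (hm : 2 ≤ m) : (((T0 hm : Matrix (Fin m) (Fin m) ℝ))ᵀ *
    (T0 hm : Matrix (Fin m) (Fin m) ℝ)).trace = 2 := by
  show ((A0 (i0 hm) (i1 hm))ᵀ * A0 (i0 hm) (i1 hm)).trace = 2
  rw [A0_transpose, Matrix.neg_mul, A0_mul_self _ _ (i0_ne_i1 hm), neg_neg, P0_trace _ _ (i0_ne_i1 hm)]

lemma T0_gnorm (hm : 2 ≤ m) : gnorm (g0 m) (T0 hm) = 1 := by
  rw [gnorm, g0_apply, T0_trace hm]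
  norm_num

lemma T0_ne_zero (hm : 2 ≤ m) : T0 hm ≠ (0 : ↥(skewMat m)) := by
  intro h
  have h2 : (T0 hm : Matrix (Fin m) (Fin m) ℝ) (i0 hm) (i1 hm) = 0 := by
    rw [h]; simp
  rw [show (T0 hm : Matrix (Fin m) (Fin m) ℝ) = A0 (i0 hm) (i1 hm) from rfl,
    A0_apply_ne _ _ (i0_ne_i1 hm)] at h2
  norm_num at h2

lemma smul_val (hm : 2 ≤ m) (c : ℝ) :
    Real.sqrt ((((c • A0 (i0 hm) (i1 hm)) * (c • A0 (i0 hm) (i1 hm)) + 1)ᵀ *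
      ((c • A0 (i0 hm) (i1 hm)) * (c • A0 (i0 hm) (i1 hm)) + 1)).trace) =
    Real.sqrt ((m : ℝ) - 4*c^2 + 2*c^4) := by
  rw [val_calc _ _ (i0_ne_i1 hm) c]

lemma smul_val_ge (c : ℝ) :
    Real.sqrt ((m : ℝ) - 2) ≤ Real.sqrt ((m : ℝ) - 4*c^2 + 2*c^4) := by
  apply Real.sqrt_le_sqrt
  nlinarith [sq_nonneg (c^2 - 1)]

end Witness

/-- Computation of the H-type deviation for the reference inner product. -/
lemma deltaOf_g0 (hm : 2 ≤ m) :
    deltaOf (g0 m) (J0 m) = Real.sqrt (((m : ℝ) - 2) / m) := by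
  have hm0 : 0 < m := by omega
  have hm2 : (0:ℝ) ≤ (m:ℝ) - 2 := by
    have : (2:ℝ) ≤ (m:ℝ) := by exact_mod_cast hm
    linarith
  set S := (fun T => hsNorm (J0 m T ∘ₗ J0 m T + LinearMap.id)) ''
    {T : ↥(skewMat m) | gnorm (g0 m) T = 1} with hS
  have hmem : Real.sqrt ((m:ℝ) - 2) ∈ S := by
    refine ⟨T0 hm, T0_gnorm hm, ?_⟩
    dsimp only
    rw [hs_val]
    have : (T0 hm : Matrix (Fin m) (Fin m) ℝ) = (1:ℝ) • A0 (i0 hm) (i1 hm) := by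
      rw [one_smul]; rfl
    rw [this, smul_val hm 1]
    congr 1
    ring
  have hub : ∀ x ∈ S, x ≤ Real.sqrt ((m:ℝ) - 2) := by
    rintro x ⟨T, hT, rfl⟩
    dsimp only
    rw [hs_val]
    apply Real.sqrt_le_sqrt
    have hA := skew_coe T
    have hAA : ((T : Matrix (Fin m) (Fin m) ℝ))ᵀ * (T : Matrix (Fin m) (Fin m) ℝ) =
      -((T : Matrix (Fin m) (Fin m) ℝ) * (T : Matrix (Fin m) (Fin m) ℝ)) := by
      rw [hA, Matrix.neg_mul]
    exact ub hm0 _ hA (sphere_two T hT)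
  have hsup : sSup S = Real.sqrt ((m:ℝ) - 2) := by
    apply le_antisymm
    · exact csSup_le ⟨_, hmem⟩ hub
    · exact le_csSup ⟨_, hub⟩ hmem
  simp only [deltaOf, ← hS, hsup, finrank_euclideanSpace, Fintype.card_fin]
  rw [Real.sqrt_div hm2, inv_mul_eq_div]

set_option maxHeartbeats 1000000 in
/-- Lower bound for the deviation relative to any vertical inner product. -/
lemma deltaOf_lower (hm : 2 ≤ m)
    (B : EuclideanSpace ℝ (Fin m) →ₗ[ℝ] EuclideanSpace ℝ (Fin m) →ₗ[ℝ] ↥(skewMat m))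
    (hB : ∀ u v : EuclideanSpace ℝ (Fin m),
      (B u v : Matrix (Fin m) (Fin m) ℝ) =
        Matrix.vecMulVec (fun i => u i) (fun i => v i)
          - Matrix.vecMulVec (fun i => v i) (fun i => u i))
    (g : ↥(skewMat m) →ₗ[ℝ] ↥(skewMat m) →ₗ[ℝ] ℝ)
    (J : ↥(skewMat m) → EuclideanSpace ℝ (Fin m) →ₗ[ℝ] EuclideanSpace ℝ (Fin m))
    (hg : IsInnerProd g) (hJ : IsJOp B g J) :
    Real.sqrt (((m : ℝ) - 2) / m) ≤ deltaOf g J := by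
  have hm2 : (0:ℝ) ≤ (m:ℝ) - 2 := by
    have : (2:ℝ) ≤ (m:ℝ) := by exact_mod_cast hm
    linarith
  -- linearity of J
  have hJadd : ∀ S T, J (S + T) = J S + J T := by
    intro S T
    apply LinearMap.ext; intro u
    apply ext_inner_right ℝ; intro v
    rw [hJ, LinearMap.add_apply, inner_add_left, hJ, hJ, map_add]
  have hJsmul : ∀ (c : ℝ) T, J (c • T) = c • J T := by
    intro c T
    apply LinearMap.ext; intro u
    apply ext_inner_right ℝ; intro v
    rw [hJ, LinearMap.smul_apply, real_inner_smul_left, hJ, _root_.map_smul, smul_eq_mul]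
  -- antisymmetry of B
  have hBneg : ∀ u v : EuclideanSpace ℝ (Fin m), B v u = -(B u v) := by
    intro u v
    apply Subtype.ext
    have h1 : ((-(B u v) : ↥(skewMat m)) : Matrix (Fin m) (Fin m) ℝ)
        = -((B u v : Matrix (Fin m) (Fin m) ℝ)) := rfl
    rw [h1, hB, hB, neg_sub]
  -- skew-adjointness of J T
  have hadj : ∀ T, (-(J T)) = LinearMap.adjoint (J T) := by
    intro T
    rw [LinearMap.eq_adjoint_iff]
    intro x y
    rw [LinearMap.neg_apply, inner_neg_left, hJ, real_inner_comm, hJ, hBneg x y,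
      map_neg]
    exact (LinearMap.neg_apply _ _).symm
  have hskewK : ∀ T, ((toEuclideanLin.symm (J T) : Matrix (Fin m) (Fin m) ℝ))ᵀ
      = -(toEuclideanLin.symm (J T)) := by
    intro T
    have h1 : toEuclideanLin ((toEuclideanLin.symm (J T) : Matrix (Fin m) (Fin m) ℝ)ᴴ)
        = LinearMap.adjoint (J T) := by
      rw [Matrix.toEuclideanLin_conjTranspose_eq_adjoint, LinearEquiv.apply_symm_apply]
    rw [← hadj T] at h1
    have h2 : toEuclideanLin ((toEuclideanLin.symm (J T) : Matrix (Fin m) (Fin m) ℝ)ᴴ)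
        = toEuclideanLin (-(toEuclideanLin.symm (J T) : Matrix (Fin m) (Fin m) ℝ)) := by
      rw [h1, map_neg, LinearEquiv.apply_symm_apply]
    have h3 := toEuclideanLin.injective h2
    rw [ct_eq] at h3
    exact h3
  -- the matrix realization of J
  let K : ↥(skewMat m) →ₗ[ℝ] ↥(skewMat m) :=
  { toFun := fun T => ⟨toEuclideanLin.symm (J T), hskewK T⟩
    map_add' := fun S T => by
      apply Subtype.ext
      simp only [hJadd, map_add, Submodule.coe_add]
    map_smul' := fun c T => by
      apply Subtype.ext
      simp only [hJsmul, _root_.map_smul, SetLike.val_smul, RingHom.id_apply] }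
  have hJK : ∀ T, J T = toEuclideanLin ((K T : Matrix (Fin m) (Fin m) ℝ)) := fun T =>
    (toEuclideanLin.apply_symm_apply (J T)).symm
  -- K is injective, hence surjective
  have hker : ∀ T, K T = 0 → T = 0 := by
    intro T hT0
    have hmat0 : (K T : Matrix (Fin m) (Fin m) ℝ) = 0 := by rw [hT0]; rfl
    have hJT : J T = 0 := by rw [hJK T, hmat0, map_zero]
    by_contra hne
    have hTT : g T T = 0 := by
      have hrepr := repr_skew B hB T
      have h1 : (g.flip T) T = (g.flip T) (∑ i : Fin m, ∑ j : Fin m,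
          ((1/2 : ℝ) * (T : Matrix (Fin m) (Fin m) ℝ) i j) •
            B (EuclideanSpace.single i 1) (EuclideanSpace.single j 1)) :=
        congrArg (g.flip T) hrepr
      rw [map_sum] at h1
      have h2 : ∀ i : Fin m, (g.flip T) (∑ j : Fin m,
          ((1/2 : ℝ) * (T : Matrix (Fin m) (Fin m) ℝ) i j) •
            B (EuclideanSpace.single i 1) (EuclideanSpace.single j 1)) = 0 := by
        intro i
        rw [map_sum]
        apply Finset.sum_eq_zero
        intro j _
        rw [_root_.map_smul, smul_eq_mul]
        have : (g.flip T) (B (EuclideanSpace.single i 1) (EuclideanSpace.single j 1)) = 0 := by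
          rw [LinearMap.flip_apply, ← hJ, hJT]
          simp
        rw [this, mul_zero]
      have h3 : (g.flip T) T = 0 := by
        rw [h1]
        exact Finset.sum_eq_zero fun i _ => h2 i
      rw [LinearMap.flip_apply] at h3
      exact h3
    exact absurd hTT (ne_of_gt (hg.posdef T hne))
  have hinj : Function.Injective K := by
    intro S T h
    have := hker (S - T) (by rw [map_sub, h, sub_self])
    exact sub_eq_zero.mp this
  have hsurj : Function.Surjective K := LinearMap.injective_iff_surjective.mp hinj
  -- the witness
  obtain ⟨T₁, hT₁⟩ := hsurj (T0 hm)
  have hT₁ne : T₁ ≠ 0 := by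
    intro h
    rw [h, map_zero] at hT₁
    exact T0_ne_zero hm hT₁.symm
  set r := gnorm g T₁ with hr
  have hrpos : 0 < r := Real.sqrt_pos.mpr (hg.posdef T₁ hT₁ne)
  set c := r⁻¹ with hc
  have hcpos : 0 < c := inv_pos.mpr hrpos
  set Tstar := c • T₁ with hTs
  have hsph : gnorm g Tstar = 1 := by
    have h1 : g Tstar Tstar = c^2 * g T₁ T₁ := by
      have e1 : g (c • T₁) = c • g T₁ := _root_.map_smul g c T₁
      have e3 : (g T₁) (c • T₁) = c • (g T₁ T₁) := _root_.map_smul (g T₁) c T₁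
      rw [hTs, e1, LinearMap.smul_apply, e3, smul_eq_mul, smul_eq_mul]
      ring
    rw [gnorm, h1, Real.sqrt_mul (sq_nonneg c), Real.sqrt_sq hcpos.le]
    rw [← gnorm, ← hr, hc]
    exact inv_mul_cancel₀ hrpos.ne'
  have hKst : (K Tstar : Matrix (Fin m) (Fin m) ℝ) = c • A0 (i0 hm) (i1 hm) := by
    rw [hTs, _root_.map_smul, hT₁]
    rfl
  have hval : hsNorm (J Tstar ∘ₗ J Tstar + LinearMap.id)
      = Real.sqrt ((m:ℝ) - 4*c^2 + 2*c^4) := by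
    rw [hJK, hKst, opform, hsNorm_eq, val_calc _ _ (i0_ne_i1 hm) c]
  -- bounding the set from above
  letI core : InnerProductSpace.Core ℝ ↥(skewMat m) :=
  { inner := fun s t => g s t
    conj_inner_symm := fun s t => by simp [starRingEnd_apply, hg.symm s t]
    re_inner_nonneg := fun t => by
      rcases eq_or_ne t 0 with h | h
      · simp [h]
      · simpa using (hg.posdef t h).le
    add_left := fun x y z => by simp [map_add, LinearMap.add_apply]
    smul_left := fun x y r => by simp [_root_.map_smul, LinearMap.smul_apply, starRingEnd_apply]
    definite := fun t h => by
      by_contra hne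
      exact absurd h (ne_of_gt (hg.posdef t hne)) }
  letI : NormedAddCommGroup ↥(skewMat m) := InnerProductSpace.Core.toNormedAddCommGroup (cd := core)
  letI : InnerProductSpace ℝ ↥(skewMat m) := InnerProductSpace.ofCore core.toCore
  have hinner : ∀ s t : ↥(skewMat m), ⟪s, t⟫ = g s t := fun s t => rfl
  let Lmap : ↥(skewMat m) →ₗ[ℝ] EuclideanSpace ℝ (Fin m × Fin m) :=
    (flatE m) ∘ₗ ((skewMat m).subtype ∘ₗ K)
  let b := stdOrthonormalBasis ℝ ↥(skewMat m)
  set C := ∑ i, ‖Lmap (b i)‖ with hCdef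
  have hCnn : (0:ℝ) ≤ C := Finset.sum_nonneg fun i _ => norm_nonneg _
  have hLbound : ∀ T : ↥(skewMat m), ‖T‖ = 1 → ‖Lmap T‖ ≤ C := by
    intro T hT
    have h0 : Lmap T = ∑ i, b.repr T i • Lmap (b i) := by
      conv_lhs => rw [← b.sum_repr T]
      rw [map_sum]
      exact Finset.sum_congr rfl fun i _ => by rw [_root_.map_smul]
    calc ‖Lmap T‖ = ‖∑ i, b.repr T i • Lmap (b i)‖ := by rw [h0]
      _ ≤ ∑ i, ‖b.repr T i • Lmap (b i)‖ := norm_sum_le _ _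
      _ ≤ ∑ i, ‖Lmap (b i)‖ := by
          apply Finset.sum_le_sum
          intro i _
          rw [norm_smul]
          have h1 : ‖b.repr T i‖ ≤ 1 := by
            rw [b.repr_apply_apply, Real.norm_eq_abs]
            calc |⟪b i, T⟫| ≤ ‖b i‖ * ‖T‖ := abs_real_inner_le_norm _ _
              _ = 1 := by rw [b.orthonormal.1 i, hT, mul_one]
          calc ‖b.repr T i‖ * ‖Lmap (b i)‖ ≤ 1 * ‖Lmap (b i)‖ :=
                mul_le_mul_of_nonneg_right h1 (norm_nonneg _)
            _ = ‖Lmap (b i)‖ := one_mul _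
  set Sg := (fun T => hsNorm (J T ∘ₗ J T + LinearMap.id)) ''
    {T : ↥(skewMat m) | gnorm g T = 1} with hSg
  have hbdd : ∀ T : ↥(skewMat m), gnorm g T = 1 →
      hsNorm (J T ∘ₗ J T + LinearMap.id) ≤ C * C + Real.sqrt m := by
    intro T hT
    have hTnorm : ‖T‖ = 1 := by
      have h1 : g T T = 1 := Real.sqrt_eq_one.mp hT
      have h2 : ⟪T, T⟫ = ‖T‖ * ‖T‖ := real_inner_self_eq_norm_mul_norm T
      rw [hinner T T] at h2
      nlinarith [norm_nonneg T]
    have hKle : Real.sqrt ((((K T : Matrix (Fin m) (Fin m) ℝ))ᵀ *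
        (K T : Matrix (Fin m) (Fin m) ℝ)).trace) ≤ C := by
      have h1 : Lmap T = flatE m ((K T : Matrix (Fin m) (Fin m) ℝ)) := rfl
      have h2 := hLbound T hTnorm
      rw [h1] at h2
      rw [← flatE_norm]
      exact h2
    rw [hJK, opform, hsNorm_eq]
    refine le_trans (hs_bound _) ?_
    have := mul_le_mul hKle hKle (Real.sqrt_nonneg _) hCnn
    linarith
  have hBdd : BddAbove Sg := by
    refine ⟨C * C + Real.sqrt m, ?_⟩
    rintro x ⟨T, hT, rfl⟩
    exact hbdd T hT
  have hmemSg : Real.sqrt ((m:ℝ) - 4*c^2 + 2*c^4) ∈ Sg := by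
    refine ⟨Tstar, hsph, ?_⟩
    dsimp only
    rw [hval]
  have hsup_ge : Real.sqrt ((m:ℝ) - 2) ≤ sSup Sg :=
    le_trans (smul_val_ge c) (le_csSup hBdd hmemSg)
  -- conclude
  simp only [deltaOf, ← hSg, finrank_euclideanSpace, Fintype.card_fin]
  rw [Real.sqrt_div hm2, div_eq_inv_mul]
  exact mul_le_mul_of_nonneg_left hsup_ge (inv_nonneg.mpr (Real.sqrt_nonneg _))

end HTFree

/-- H-type deviation of the free Carnot group `F_{2,m}` of step two and rank `m ≥ 2`:
here `V₁ = ℝ^m`, `V₂` is the space of skew-symmetric `m × m` matrices, and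
`B(u,v) = u vᵀ − v uᵀ`. The deviation equals `√((m−2)/m)`. -/
theorem htypeDeviation_free_step_two
    (m : ℕ) (hm : 2 ≤ m)
    (B : EuclideanSpace ℝ (Fin m) →ₗ[ℝ] EuclideanSpace ℝ (Fin m) →ₗ[ℝ] ↥(skewMat m))
    (hB : ∀ u v : EuclideanSpace ℝ (Fin m),
      (B u v : Matrix (Fin m) (Fin m) ℝ) =
        Matrix.vecMulVec (fun i => u i) (fun i => v i)
          - Matrix.vecMulVec (fun i => v i) (fun i => u i)) :
    htypeDeviation B = Real.sqrt (((m : ℝ) - 2) / (m : ℝ)) := by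
  have hg0 : IsInnerProd (HTFree.g0 m) := ⟨HTFree.g0_symm, HTFree.g0_posdef⟩
  have hJ0 : IsJOp B (HTFree.g0 m) (HTFree.J0 m) := fun T U V => HTFree.g0_J0_inner B hB T U V
  have hmem : Real.sqrt (((m : ℝ) - 2) / (m : ℝ)) ∈
      { d : ℝ | ∃ (g : ↥(skewMat m) →ₗ[ℝ] ↥(skewMat m) →ₗ[ℝ] ℝ)
          (J : ↥(skewMat m) → EuclideanSpace ℝ (Fin m) →ₗ[ℝ] EuclideanSpace ℝ (Fin m)),
        IsInnerProd g ∧ IsJOp B g J ∧ d = deltaOf g J } :=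
    ⟨HTFree.g0 m, HTFree.J0 m, hg0, hJ0, (HTFree.deltaOf_g0 hm).symm⟩
  have hlb : ∀ d ∈ { d : ℝ | ∃ (g : ↥(skewMat m) →ₗ[ℝ] ↥(skewMat m) →ₗ[ℝ] ℝ)
          (J : ↥(skewMat m) → EuclideanSpace ℝ (Fin m) →ₗ[ℝ] EuclideanSpace ℝ (Fin m)),
        IsInnerProd g ∧ IsJOp B g J ∧ d = deltaOf g J },
      Real.sqrt (((m : ℝ) - 2) / (m : ℝ)) ≤ d := by
    rintro d ⟨g, J, hg, hJ, rfl⟩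
    exact HTFree.deltaOf_lower hm B hB g J hg hJ
  rw [htypeDeviation]
  exact le_antisymm (csInf_le ⟨_, hlb⟩ hmem) (le_csInf ⟨_, hmem⟩ hlb)

end
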